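/- Define φ(y) = y − ln y − 1 for y > 0. Let C > 0 and let a₁ ∈ (0,1) and a₂ ∈ (1,∞) be the two positive roots of φ(y) = C. Let I be an interval of length 1 and let v : I → (0,∞) be measurable with v and ln v integrable on I and ∫_I (v(x) − ln v(x) − 1) dx ≤ C. Then a₁ − C − 1 ≤ ∫_I ln v(x) dx ≤ ln a₂; in particular |∫_I ln v(x) dx| is bounded by a constant depending only on C. -/

import Mathlib

open MeasureTheory

/-- Estimate (3.35): two-sided bound on `∫_I ln v` over a unit interval `I`, given the
entropy bound `∫_I (v − ln v − 1) ≤ C`, where `a₁ ∈ (0,1)` and `a₂ ∈ (1,∞)` are the two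
roots of `y − ln y − 1 = C`. -/
theorem stmt_13 (C a₁ a₂ : ℝ) (hC : 0 < C)
    (ha₁ : a₁ ∈ Set.Ioo (0 : ℝ) 1) (ha₂ : a₂ ∈ Set.Ioi (1 : ℝ))
    (hroot₁ : a₁ - Real.log a₁ - 1 = C) (hroot₂ : a₂ - Real.log a₂ - 1 = C)
    (t : ℝ) (v : ℝ → ℝ) (hmeas : Measurable v)
    (hvpos : ∀ x ∈ Set.Icc t (t + 1), 0 < v x)
    (hvint : IntegrableOn v (Set.Icc t (t + 1)))
    (hlogint : IntegrableOn (fun x => Real.log (v x)) (Set.Icc t (t + 1)))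
    (hent : (∫ x in Set.Icc t (t + 1), (v x - Real.log (v x) - 1)) ≤ C) :
    a₁ - C - 1 ≤ (∫ x in Set.Icc t (t + 1), Real.log (v x)) ∧
      (∫ x in Set.Icc t (t + 1), Real.log (v x)) ≤ Real.log a₂ := by
  obtain ⟨ha₁0, ha₁1⟩ := ha₁
  have ha₂1 : (1:ℝ) < a₂ := ha₂
  set I := Set.Icc t (t + 1) with hI
  have hμfin : volume I < ⊤ := by
    rw [hI, Real.volume_Icc]
    exact ENNReal.ofReal_lt_top
  have hμ : (volume I).toReal = 1 := by
    rw [hI, Real.volume_Icc]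
    norm_num
  have hconst : ∀ c : ℝ, (∫ _ in I, c) = c := by
    intro c
    rw [setIntegral_const, measureReal_def, hμ, one_smul]
  have hcint : ∀ c : ℝ, IntegrableOn (fun _ => c) I := fun c =>
    integrableOn_const hμfin.ne
  set L := ∫ x in I, Real.log (v x) with hL
  set V := ∫ x in I, v x with hV
  have hVL : V - L - 1 ≤ C := by
    have heq : (∫ x in I, (v x - Real.log (v x) - 1)) = V - L - 1 := by
      have h1 : IntegrableOn (fun x => v x - Real.log (v x)) I := hvint.sub hlogint
      rw [integral_sub h1 (hcint 1), integral_sub hvint hlogint, hconst]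
    rw [heq] at hent
    exact hent
  have hkey : ∀ a : ℝ, 0 < a → L * a ≤ V + (Real.log a - 1) * a := by
    intro a ha
    have hpt : ∀ x ∈ I, Real.log (v x) * a ≤ v x + (Real.log a - 1) * a := by
      intro x hx
      have hvx := hvpos x hx
      have h1 : Real.log (v x / a) ≤ v x / a - 1 :=
        Real.log_le_sub_one_of_pos (div_pos hvx ha)
      rw [Real.log_div (ne_of_gt hvx) (ne_of_gt ha)] at h1
      have h2 : (Real.log (v x) - Real.log a) * a ≤ (v x / a - 1) * a :=
        mul_le_mul_of_nonneg_right h1 (le_of_lt ha)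
      have h3 : v x / a * a = v x := div_mul_cancel₀ _ (ne_of_gt ha)
      nlinarith [h2, h3]
    have hmono : (∫ x in I, Real.log (v x) * a) ≤ ∫ x in I, (v x + (Real.log a - 1) * a) :=
      setIntegral_mono_on (hlogint.mul_const a) (hvint.add (hcint _))
        measurableSet_Icc hpt
    have hl : (∫ x in I, Real.log (v x) * a) = L * a := by
      rw [integral_mul_const]
    have hr : (∫ x in I, (v x + (Real.log a - 1) * a)) = V + (Real.log a - 1) * a := by
      rw [integral_add hvint (hcint _), hconst]
    rw [hl, hr] at hmono
    exact hmono
  have hk₁ := hkey a₁ ha₁0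
  have hk₂ := hkey a₂ (lt_trans one_pos ha₂1)
  constructor
  · nlinarith [hk₁, hVL, hroot₁, ha₁0, ha₁1, mul_pos ha₁0 (sub_pos.mpr ha₁1)]
  · nlinarith [hk₂, hVL, hroot₂, ha₂1, sub_pos.mpr ha₂1]
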